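/- Fix 0 ≤ k ≤ n. Let s ∈ 𝔱_sr and z = [[0,d],[0,0]] ∈ 𝔇. Then s + z is Sp_{2n}(k)-conjugate to an element of 𝔱_sr + 𝔇_k if and only if there exists a permutation w ∈ Sₙ such that ẇ·(s+z)·ẇ⁻¹ ∈ 𝔱_sr + 𝔇_k, where ẇ = [[P_w,0],[0,P_w]] ∈ Sp_{2n}(k) and P_w is the permutation matrix of w; equivalently, if and only if the number of indices i with dᵢᵢ ≠ 0 is at most k. In particular, Y_k ∩ (𝔱_sr + 𝔇) = ⋃_{w ∈ Sₙ} ẇ·(𝔱_sr + 𝔇_k)·ẇ⁻¹, where Y_k = ⋃_{g ∈ Sp_{2n}(k)} g·(𝔱_sr + 𝔇_k)·g⁻¹. -/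

import Mathlib

open Matrix

/-- The Gram matrix `J = [[0, 1ₙ], [1ₙ, 0]]` of the symplectic form. -/
def Jsp (k : Type*) [Field k] (n : ℕ) : Matrix (Fin n ⊕ Fin n) (Fin n ⊕ Fin n) k :=
  Matrix.fromBlocks 0 1 1 0

/-- The element `diag(t₁,…,tₙ,t₁,…,tₙ)` of `𝔱`. -/
def tDiag (k : Type*) [Field k] (n : ℕ) (t : Fin n → k) :
    Matrix (Fin n ⊕ Fin n) (Fin n ⊕ Fin n) k :=
  Matrix.fromBlocks (Matrix.diagonal t) 0 0 (Matrix.diagonal t)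

/-- The element `[[0, diag d],[0,0]]` of `𝔇`. -/
def dMat (k : Type*) [Field k] (n : ℕ) (d : Fin n → k) :
    Matrix (Fin n ⊕ Fin n) (Fin n ⊕ Fin n) k :=
  Matrix.fromBlocks 0 (Matrix.diagonal d) 0 0

/-- The subset `𝔱_sr + 𝔇_m` of `M_{2n}(k)`: sums `s′ + z′` with `s′ = diag(t′,t′)` for `t′`
with pairwise distinct entries and `z′ = [[0, diag d′],[0,0]]` with `d′ᵢ = 0` for `i > m`
(0-based: `m ≤ i`). -/
def TDset (k : Type*) [Field k] (n m : ℕ) :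
    Set (Matrix (Fin n ⊕ Fin n) (Fin n ⊕ Fin n) k) :=
  {x | ∃ t' d' : Fin n → k, Function.Injective t' ∧
    (∀ i : Fin n, m ≤ (i : ℕ) → d' i = 0) ∧ x = tDiag k n t' + dMat k n d'}

/-- The element `ẇ = [[P_w, 0],[0, P_w]] ∈ Sp_{2n}(k)` for a permutation `w ∈ Sₙ`. -/
def wMat (k : Type*) [Field k] (n : ℕ) (w : Equiv.Perm (Fin n)) :
    Matrix (Fin n ⊕ Fin n) (Fin n ⊕ Fin n) k :=
  Matrix.fromBlocks (w.permMatrix k) 0 0 (w.permMatrix k)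

variable {k : Type} [Field k] {n : ℕ}

lemma MD_eq (a b : Fin n → k) :
    tDiag k n a + dMat k n b = fromBlocks (diagonal a) (diagonal b) 0 (diagonal a) := by
  rw [tDiag, dMat, fromBlocks_add, add_zero, add_zero, zero_add]

lemma M_mul (a b a' b' : Fin n → k) :
    (tDiag k n a + dMat k n b) * (tDiag k n a' + dMat k n b') =
      tDiag k n (fun i => a i * a' i) + dMat k n (fun i => a i * b' i + a' i * b i) := by
  rw [MD_eq, MD_eq, MD_eq, fromBlocks_multiply, fromBlocks_inj]
  refine ⟨by simp, ?_, by simp, by simp⟩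
  rw [diagonal_mul_diagonal, diagonal_mul_diagonal, ← diagonal_add]
  congr 1
  exact congrArg diagonal (funext fun i => mul_comm _ _)

lemma tDiag_add (u v : Fin n → k) :
    tDiag k n (fun i => u i + v i) = tDiag k n u + tDiag k n v := by
  rw [tDiag, tDiag, tDiag, fromBlocks_add, ← diagonal_add]
  simp

lemma dMat_add (u v : Fin n → k) :
    dMat k n (fun i => u i + v i) = dMat k n u + dMat k n v := by
  rw [dMat, dMat, dMat, fromBlocks_add, ← diagonal_add]
  simp

lemma tDiag_zero : tDiag k n (fun _ => 0) = 0 := by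
  rw [tDiag, diagonal_zero, fromBlocks_zero]

lemma dMat_zero : dMat k n (fun _ => 0) = 0 := by
  rw [dMat, diagonal_zero, fromBlocks_zero]

lemma M_algebraMap (c : k) :
    algebraMap k (Matrix (Fin n ⊕ Fin n) (Fin n ⊕ Fin n) k) c
      = tDiag k n (fun _ => c) + dMat k n (fun _ => 0) := by
  rw [dMat_zero, add_zero]
  ext (i|i) (j|j) <;>
    simp [tDiag, Matrix.algebraMap_matrix_apply, diagonal_apply, Sum.inl.injEq, fromBlocks]

open Matrix Polynomial in
lemma aeval_M (a b : Fin n → k) (p : k[X]) :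
    aeval (tDiag k n a + dMat k n b) p =
      tDiag k n (fun i => p.eval (a i)) +
        dMat k n (fun i => b i * p.derivative.eval (a i)) := by
  induction p using Polynomial.induction_on with
  | C c =>
      rw [aeval_C, M_algebraMap]
      simp only [eval_C, derivative_C, eval_zero, mul_zero]
  | add p q hp hq =>
      rw [map_add, hp, hq, derivative_add]
      have h1 : (fun i => (p + q).eval (a i)) =
          fun i => p.eval (a i) + q.eval (a i) := by funext i; simp
      have h2 : (fun i => b i * (p.derivative + q.derivative).eval (a i)) =
          fun i => b i * p.derivative.eval (a i) + b i * q.derivative.eval (a i) := by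
        funext i; simp [mul_add]
      rw [h1, h2, tDiag_add, dMat_add]
      abel
  | monomial m c ih =>
      have h : (C c * X ^ (m + 1) : k[X]) = (C c * X ^ m) * X := by ring
      have hsplit : ∀ z : Matrix (Fin n ⊕ Fin n) (Fin n ⊕ Fin n) k,
          aeval z (C c * X ^ m * X) = aeval z (C c * X ^ m) * z := fun z => by
        rw [_root_.map_mul, aeval_X]
      rw [h, hsplit, ih, M_mul]
      congr 1
      · exact congrArg (tDiag k n) (funext fun i => by simp [eval_mul])
      · refine congrArg (dMat k n) (funext fun i => ?_)
        simp only [derivative_mul, derivative_X, derivative_C, eval_add, eval_mul, eval_X,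
          eval_C, zero_mul, mul_one, eval_zero, zero_add]
        ring

open Matrix Polynomial in
lemma aeval_conj (g x : Matrix (Fin n ⊕ Fin n) (Fin n ⊕ Fin n) k) (hg : IsUnit g.det)
    (p : k[X]) : aeval (g * x * g⁻¹) p = g * aeval x p * g⁻¹ := by
  induction p using Polynomial.induction_on with
  | C c =>
      rw [aeval_C, aeval_C, Algebra.algebraMap_eq_smul_one]
      rw [Matrix.mul_smul, Matrix.smul_mul, Matrix.mul_one, Matrix.mul_nonsing_inv g hg]
  | add p q hp hq => rw [map_add, map_add, hp, hq, Matrix.mul_add, Matrix.add_mul]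
  | monomial m c ih =>
      have h : (C c * X ^ (m + 1) : k[X]) = (C c * X ^ m) * X := by ring
      have hsplit : ∀ z : Matrix (Fin n ⊕ Fin n) (Fin n ⊕ Fin n) k,
          aeval z (C c * X ^ m * X) = aeval z (C c * X ^ m) * z := fun z => by
        rw [_root_.map_mul, aeval_X]
      rw [h, hsplit, hsplit, ih]
      have hx : g⁻¹ * (g * x * g⁻¹) = x * g⁻¹ := by
        rw [← Matrix.mul_assoc, ← Matrix.mul_assoc, Matrix.nonsing_inv_mul g hg, Matrix.one_mul]
      calc g * (aeval x) (C c * X ^ m) * g⁻¹ * (g * x * g⁻¹)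
          = g * (aeval x) (C c * X ^ m) * (g⁻¹ * (g * x * g⁻¹)) := by
            rw [Matrix.mul_assoc]
        _ = g * ((aeval x) (C c * X ^ m) * x) * g⁻¹ := by
            rw [hx, ← Matrix.mul_assoc, Matrix.mul_assoc g]

open Matrix Polynomial in
lemma charpoly_M (a b : Fin n → k) :
    (tDiag k n a + dMat k n b).charpoly = (∏ i, ((X : k[X]) - C (a i))) ^ 2 := by
  rw [MD_eq, Matrix.charpoly_fromBlocks_zero₂₁, sq]
  have hdiag : (diagonal a).charpoly = ∏ i, ((X : k[X]) - C (a i)) := by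
    rw [Matrix.charpoly_of_upperTriangular _ (Matrix.blockTriangular_diagonal a)]
    exact Finset.prod_congr rfl fun i _ => by rw [diagonal_apply_eq]
  rw [hdiag]

open Matrix Polynomial in
lemma charpoly_conj (g x : Matrix (Fin n ⊕ Fin n) (Fin n ⊕ Fin n) k) (hg : IsUnit g.det) :
    (g * x * g⁻¹).charpoly = x.charpoly := by
  have h1 : (g * x * g⁻¹) * g = g * x := by
    rw [Matrix.mul_assoc, Matrix.nonsing_inv_mul g hg, Matrix.mul_one]
  have hC : ∀ (A B : Matrix (Fin n ⊕ Fin n) (Fin n ⊕ Fin n) k),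
      (A * B).map (C : k →+* k[X]) = A.map C * B.map C := fun A B =>
    Matrix.map_mul
  have h2 : charmatrix (g * x * g⁻¹) * (g.map (C : k →+* k[X]))
      = (g.map (C : k →+* k[X])) * charmatrix x := by
    rw [charmatrix, charmatrix, Matrix.sub_mul, Matrix.mul_sub, RingHom.mapMatrix_apply,
      RingHom.mapMatrix_apply, ← hC, h1, hC]
    congr 1
    exact (Matrix.scalar_commute (X : k[X]) (fun r => Commute.all _ _) (g.map C)).eq
  have h3 := congrArg Matrix.det h2
  rw [Matrix.det_mul, Matrix.det_mul] at h3
  have h4 : (g.map (C : k →+* k[X])).det = C g.det := (RingHom.map_det C g).symm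
  rw [h4] at h3
  have h5 : (C g.det : k[X]) ≠ 0 := by
    simpa using hg.ne_zero
  have := mul_comm (C g.det) (charmatrix x).det
  rw [Matrix.charpoly, Matrix.charpoly]
  exact mul_right_cancel₀ h5 (h3.trans (mul_comm _ _))

open Matrix Polynomial in
lemma permMatrix_mul_diagonal (w : Equiv.Perm (Fin n)) (a : Fin n → k) :
    w.permMatrix k * diagonal a = diagonal (a ∘ w) * w.permMatrix k := by
  show w.toPEquiv.toMatrix * diagonal a = diagonal (a ∘ w) * w.toPEquiv.toMatrix
  rw [PEquiv.toMatrix_toPEquiv_mul, PEquiv.mul_toMatrix_toPEquiv]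
  ext i j
  rw [submatrix_apply, submatrix_apply, id_eq]
  by_cases h : w i = j
  · subst h; simp [diagonal_apply]
  · rw [diagonal_apply_ne _ h, diagonal_apply_ne]
    intro hc
    exact h (by simpa using congrArg w hc)

open Matrix Polynomial Equiv in
lemma wMat_mul (w w' : Equiv.Perm (Fin n)) :
    wMat k n w * wMat k n w' = wMat k n (w' * w) := by
  rw [wMat, wMat, wMat, fromBlocks_multiply]
  have h : w.permMatrix k * w'.permMatrix k = (w' * w).permMatrix k := by
    show w.toPEquiv.toMatrix * w'.toPEquiv.toMatrix = (w' * w).toPEquiv.toMatrix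
    rw [Equiv.Perm.mul_def, Equiv.toPEquiv_trans, PEquiv.toMatrix_trans]
  simp only [Matrix.mul_zero, Matrix.zero_mul, add_zero, zero_add, h]

open Matrix Polynomial in
lemma wMat_one : wMat k n 1 = 1 := by
  have h : (1 : Equiv.Perm (Fin n)).permMatrix k = 1 := by
    show (1 : Equiv.Perm (Fin n)).toPEquiv.toMatrix = 1
    rw [Equiv.Perm.one_def, Equiv.toPEquiv_refl, PEquiv.toMatrix_refl]
  rw [wMat, h, fromBlocks_one]

open Matrix Polynomial in
lemma wMat_mul_inv (w : Equiv.Perm (Fin n)) : wMat k n w * wMat k n w⁻¹ = 1 := by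
  rw [wMat_mul, inv_mul_cancel, wMat_one]

open Matrix Polynomial in
lemma wMat_inv (w : Equiv.Perm (Fin n)) : (wMat k n w)⁻¹ = wMat k n w⁻¹ :=
  Matrix.inv_eq_right_inv (wMat_mul_inv w)

open Matrix Polynomial in
lemma wMat_isUnit (w : Equiv.Perm (Fin n)) : IsUnit (wMat k n w) :=
  ⟨⟨wMat k n w, wMat k n w⁻¹, wMat_mul_inv w, by simpa using wMat_mul_inv w⁻¹⟩, rfl⟩

open Matrix Polynomial in
lemma wMat_J (w : Equiv.Perm (Fin n)) :
    (wMat k n w)ᵀ * Jsp k n * wMat k n w = Jsp k n := by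
  have h : (w.permMatrix k)ᵀ * w.permMatrix k = 1 := by
    show (w.toPEquiv.toMatrix)ᵀ * w.toPEquiv.toMatrix = 1
    rw [← PEquiv.toMatrix_symm, ← Equiv.toPEquiv_symm, ← PEquiv.toMatrix_trans,
      ← Equiv.toPEquiv_trans, Equiv.symm_trans_self, Equiv.toPEquiv_refl, PEquiv.toMatrix_refl]
  rw [wMat, Jsp, fromBlocks_transpose, fromBlocks_multiply, fromBlocks_multiply]
  simp only [Matrix.mul_zero, Matrix.zero_mul, add_zero, zero_add, Matrix.mul_one,
    Matrix.one_mul, transpose_zero, h]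

open Matrix Polynomial in
lemma wConj (w : Equiv.Perm (Fin n)) (a b : Fin n → k) :
    wMat k n w * (tDiag k n a + dMat k n b) * (wMat k n w)⁻¹ =
      tDiag k n (a ∘ w) + dMat k n (b ∘ w) := by
  have h : wMat k n w * (tDiag k n a + dMat k n b) =
      (tDiag k n (a ∘ w) + dMat k n (b ∘ w)) * wMat k n w := by
    rw [MD_eq, MD_eq, wMat, fromBlocks_multiply, fromBlocks_multiply]
    simp only [Matrix.mul_zero, Matrix.zero_mul, add_zero, zero_add,
      permMatrix_mul_diagonal]
  rw [wMat_inv, h, Matrix.mul_assoc, wMat_mul_inv, Matrix.mul_one]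

open Matrix Polynomial in
lemma dMat_apply_diag (e : Fin n → k) (i : Fin n) :
    dMat k n e (Sum.inl i) (Sum.inr i) = e i := by
  rw [dMat]
  show (diagonal e) i i = e i
  rw [diagonal_apply_eq]

open Matrix Polynomial in
lemma count_le [CharP k 2] {m : ℕ} (hm : m ≤ n) (t d : Fin n → k) (ht : Function.Injective t)
    (g : Matrix (Fin n ⊕ Fin n) (Fin n ⊕ Fin n) k) (hg : IsUnit g)
    (hmem : g * (tDiag k n t + dMat k n d) * g⁻¹ ∈ TDset k n m) :
    Set.ncard {i : Fin n | d i ≠ 0} ≤ m := by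
  classical
  obtain ⟨t', d', ht', hd', hy⟩ := hmem
  have hdet : IsUnit g.det := (Matrix.isUnit_iff_isUnit_det g).mp hg
  set x := tDiag k n t + dMat k n d with hx
  have hcp : (∏ i, ((X:k[X]) - C (t' i)))^2 = (∏ i, ((X:k[X]) - C (t i)))^2 := by
    rw [← charpoly_M t' d', ← hy, charpoly_conj _ _ hdet, hx, charpoly_M]
  have hroot : ∀ i, ∃ l, t' i = t l := by
    intro i
    have h0 : Polynomial.eval (t' i) ((∏ l, ((X:k[X]) - C (t l)))^2) = 0 := by
      rw [← hcp, eval_pow, eval_prod]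
      have hz : ∏ l, Polynomial.eval (t' i) ((X:k[X]) - C (t' l)) = 0 :=
        Finset.prod_eq_zero (Finset.mem_univ i) (by simp)
      rw [hz, zero_pow two_ne_zero]
    rw [eval_pow, eval_prod] at h0
    have h1 : ∏ l, Polynomial.eval (t' i) ((X:k[X]) - C (t l)) = 0 :=
      pow_eq_zero_iff two_ne_zero |>.mp h0
    obtain ⟨l, _, hl⟩ := Finset.prod_eq_zero_iff.mp h1
    simp only [eval_sub, eval_X, eval_C] at hl
    exact ⟨l, sub_eq_zero.mp hl⟩
  have key : ∀ j : Fin n, ∃ i : Fin n, d j ≠ 0 → (d' i ≠ 0 ∧ t' i = t j) := by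
    intro j
    rcases em (d j = 0) with hj | hj
    · exact ⟨j, fun h => absurd hj h⟩
    · set S : k[X] := ∏ l ∈ Finset.univ.erase j, ((X:k[X]) - C (t l)) with hS
      set q : k[X] := S^2 * ((X:k[X]) - C (t j)) with hq
      have h2 : (C (2:k) : k[X]) = 0 := by
        have h2k : (2:k) = 0 := by
          have := CharP.cast_eq_zero k 2
          simpa using this
        rw [h2k, map_zero]
      have hqd : q.derivative = S^2 := by
        rw [hq, derivative_mul, derivative_sq, h2]
        simp
      have hSj : S.eval (t j) ≠ 0 := by
        rw [hS, eval_prod]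
        refine Finset.prod_ne_zero_iff.mpr fun l hl => ?_
        simp only [eval_sub, eval_X, eval_C, sub_ne_zero]
        exact fun hEq => (Finset.ne_of_mem_erase hl) (ht hEq).symm
      have hqt : ∀ i, q.eval (t i) = 0 := by
        intro i
        rcases em (i = j) with h | h
        · subst h; simp [hq]
        · rw [hq, eval_mul, eval_pow, hS, eval_prod]
          have hz : ∏ l ∈ Finset.univ.erase j, Polynomial.eval (t i) ((X:k[X]) - C (t l)) = 0 :=
            Finset.prod_eq_zero (Finset.mem_erase.mpr ⟨h, Finset.mem_univ i⟩) (by simp)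
          rw [hz]; ring
      have haevx : aeval x q = dMat k n (fun i => d i * (S.eval (t i))^2) := by
        rw [hx, aeval_M, hqd]
        have hzero : (fun i => q.eval (t i)) = fun _ => (0:k) := funext fun i => hqt i
        rw [hzero, tDiag_zero, zero_add]
        refine congrArg (dMat k n) (funext fun i => ?_)
        rw [eval_pow]
      have haevy : aeval (g * x * g⁻¹) q = dMat k n (fun i => d' i * (S.eval (t' i))^2) := by
        rw [hy, aeval_M, hqd]
        have hzero : (fun i => q.eval (t' i)) = fun _ => (0:k) := by
          funext i
          obtain ⟨l, hl⟩ := hroot i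
          rw [hl]
          exact hqt l
        rw [hzero, tDiag_zero, zero_add]
        refine congrArg (dMat k n) (funext fun i => ?_)
        rw [eval_pow]
      have hxq : aeval x q ≠ 0 := by
        rw [haevx]
        intro h0
        have hentry := congrFun (congrFun h0 (Sum.inl j)) (Sum.inr j)
        rw [dMat_apply_diag, Matrix.zero_apply] at hentry
        exact mul_ne_zero hj (pow_ne_zero _ hSj) hentry
      have hyq : aeval (g * x * g⁻¹) q ≠ 0 := by
        rw [aeval_conj _ _ hdet]
        intro h0
        apply hxq
        have h1 : g⁻¹ * (g * aeval x q * g⁻¹) * g = aeval x q := by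
          rw [← Matrix.mul_assoc, ← Matrix.mul_assoc, Matrix.nonsing_inv_mul g hdet,
            Matrix.one_mul, Matrix.mul_assoc, Matrix.nonsing_inv_mul g hdet, Matrix.mul_one]
        rw [← h1, h0, Matrix.mul_zero, Matrix.zero_mul]
      rw [haevy] at hyq
      have hex : ∃ i, d' i * (S.eval (t' i))^2 ≠ 0 := by
        by_contra hno
        push_neg at hno
        exact hyq (by rw [show (fun i => d' i * (S.eval (t' i))^2) = fun _ => (0:k) from
          funext hno, dMat_zero])
      obtain ⟨i, hi⟩ := hex
      have hd'i : d' i ≠ 0 := fun h => hi (by rw [h, zero_mul])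
      have hSi : S.eval (t' i) ≠ 0 := fun h => hi (by rw [h]; ring)
      obtain ⟨l, hl⟩ := hroot i
      have hlj : l = j := by
        by_contra h
        apply hSi
        rw [hS, eval_prod, hl]
        exact Finset.prod_eq_zero (Finset.mem_erase.mpr ⟨h, Finset.mem_univ l⟩) (by simp)
      exact ⟨i, fun _ => ⟨hd'i, by rw [hl, hlj]⟩⟩
  choose f hf using key
  rw [Set.ncard_eq_toFinset_card', Set.toFinset_setOf]
  have hc1 : (Finset.univ.filter fun i => d i ≠ 0).card ≤
      (Finset.univ.filter fun i => d' i ≠ 0).card := by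
    apply Finset.card_le_card_of_injOn f
    · intro j hj
      simp only [Finset.coe_filter, Finset.mem_coe, Set.mem_setOf_eq, Finset.mem_filter,
        Finset.mem_univ, true_and] at *
      exact (hf j hj).1
    · intro j1 hj1 j2 hj2 hEq
      simp only [Finset.coe_filter, Set.mem_setOf_eq, Finset.mem_univ, true_and] at hj1 hj2
      exact ht (by rw [← (hf j1 hj1).2, hEq, (hf j2 hj2).2])
  have hc2 : (Finset.univ.filter fun i => d' i ≠ 0) ⊆
      Finset.image (Fin.castLE hm) Finset.univ := by
    intro i hi
    simp only [Finset.mem_filter, Finset.mem_univ, true_and] at hi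
    have hlt : (i:ℕ) < m := by
      by_contra h
      exact hi (hd' i (not_lt.mp h))
    simp only [Finset.mem_image]
    exact ⟨⟨(i:ℕ), hlt⟩, Finset.mem_univ _, by ext; simp⟩
  calc (Finset.univ.filter fun i => d i ≠ 0).card
      ≤ (Finset.univ.filter fun i => d' i ≠ 0).card := hc1
    _ ≤ (Finset.image (Fin.castLE hm) Finset.univ).card := Finset.card_le_card hc2
    _ ≤ (Finset.univ : Finset (Fin m)).card := Finset.card_image_le
    _ = m := by simp

open Matrix Polynomial in
lemma card_filter_lt {m : ℕ} (hm : m ≤ n) :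
    (Finset.univ.filter fun i : Fin n => (i:ℕ) < m).card = m := by
  classical
  have himg : Finset.univ.filter (fun i : Fin n => (i:ℕ) < m) =
      Finset.image (Fin.castLE hm) Finset.univ := by
    ext i
    simp only [Finset.mem_filter, Finset.mem_univ, true_and, Finset.mem_image]
    constructor
    · intro h; exact ⟨⟨(i:ℕ), h⟩, Fin.ext (by simp)⟩
    · rintro ⟨j, rfl⟩; exact j.2
  rw [himg, Finset.card_image_of_injective _ (Fin.castLE_injective hm)]
  simp

open Matrix Polynomial in
lemma exists_perm {m : ℕ} (hm : m ≤ n) (t d : Fin n → k) (ht : Function.Injective t)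
    (hcard : Set.ncard {i : Fin n | d i ≠ 0} ≤ m) :
    ∃ w : Equiv.Perm (Fin n),
      wMat k n w * (tDiag k n t + dMat k n d) * (wMat k n w)⁻¹ ∈ TDset k n m := by
  classical
  set A : Finset (Fin n) := Finset.univ.filter (fun i => d i ≠ 0) with hA
  have hAc : A.card ≤ m := by
    rw [Set.ncard_eq_toFinset_card', Set.toFinset_setOf] at hcard
    exact hcard
  obtain ⟨B, hBsub, hBcard⟩ := Finset.exists_subset_card_eq
    (s := Finset.univ.filter fun i : Fin n => (i:ℕ) < m) (n := A.card)
    (by rw [card_filter_lt hm]; exact hAc)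
  have hcard1 : Fintype.card {i // i ∈ B} = Fintype.card {i // i ∈ A} := by
    rw [Fintype.card_coe, Fintype.card_coe, hBcard]
  have hcard2 : Fintype.card {i // i ∉ B} = Fintype.card {i // i ∉ A} := by
    rw [Fintype.card_subtype_compl, Fintype.card_subtype_compl, hcard1]
  let e1 : {i // i ∈ B} ≃ {i // i ∈ A} := Fintype.equivOfCardEq hcard1
  let e2 : {i // i ∉ B} ≃ {i // i ∉ A} := Fintype.equivOfCardEq hcard2
  let w : Equiv.Perm (Fin n) :=
    (Equiv.sumCompl (· ∈ B)).symm.trans ((e1.sumCongr e2).trans (Equiv.sumCompl (· ∈ A)))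
  have hw : ∀ i : Fin n, m ≤ (i:ℕ) → d (w i) = 0 := by
    intro i hi
    have hiB : i ∉ B := by
      intro hiB
      have := hBsub hiB
      simp only [Finset.mem_filter] at this
      omega
    have hwi : w i = ((e2 ⟨i, hiB⟩ : {i // i ∉ A}) : Fin n) := by
      simp only [w, Equiv.trans_apply, Equiv.sumCompl_symm_apply_of_neg hiB,
        Equiv.sumCongr_apply, Sum.map_inr, Equiv.sumCompl_apply_inr]
    rw [hwi]
    have hnA := (e2 ⟨i, hiB⟩).2
    by_contra h
    exact hnA (by simp only [hA, Finset.mem_filter]; exact ⟨Finset.mem_univ _, h⟩)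
  exact ⟨w, t ∘ w, d ∘ w, ht.comp w.injective, fun i hi => hw i hi, wConj w t d⟩

/-- For `s ∈ 𝔱_sr` and `z = [[0, diag d],[0,0]] ∈ 𝔇`: the element `s + z` is
`Sp_{2n}(k)`-conjugate to an element of `𝔱_sr + 𝔇_m` iff it is conjugate to one by some
permutation matrix `ẇ`, iff `#{i : dᵢ ≠ 0} ≤ m`.  In particular
`Y_m ∩ (𝔱_sr + 𝔇) = ⋃_{w ∈ Sₙ} ẇ·(𝔱_sr + 𝔇_m)·ẇ⁻¹`. -/
theorem stmt_19 (k : Type) [Field k] [IsAlgClosed k] [CharP k 2] (n m : ℕ)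
    (hn : 1 ≤ n) (hm : m ≤ n) (t : Fin n → k) (ht : Function.Injective t)
    (d : Fin n → k) :
    ((∃ g : Matrix (Fin n ⊕ Fin n) (Fin n ⊕ Fin n) k,
        IsUnit g ∧ gᵀ * Jsp k n * g = Jsp k n ∧
        g * (tDiag k n t + dMat k n d) * g⁻¹ ∈ TDset k n m) ↔
      ∃ w : Equiv.Perm (Fin n),
        wMat k n w * (tDiag k n t + dMat k n d) * (wMat k n w)⁻¹ ∈ TDset k n m) ∧
    ((∃ w : Equiv.Perm (Fin n),
        wMat k n w * (tDiag k n t + dMat k n d) * (wMat k n w)⁻¹ ∈ TDset k n m) ↔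
      Set.ncard {i : Fin n | d i ≠ 0} ≤ m) ∧
    ({x : Matrix (Fin n ⊕ Fin n) (Fin n ⊕ Fin n) k |
        (∃ g : Matrix (Fin n ⊕ Fin n) (Fin n ⊕ Fin n) k,
          IsUnit g ∧ gᵀ * Jsp k n * g = Jsp k n ∧
          ∃ y ∈ TDset k n m, x = g * y * g⁻¹) ∧
        ∃ t'' d'' : Fin n → k, Function.Injective t'' ∧
          x = tDiag k n t'' + dMat k n d''}
      = {x : Matrix (Fin n ⊕ Fin n) (Fin n ⊕ Fin n) k |
          ∃ (w : Equiv.Perm (Fin n)) (y : Matrix (Fin n ⊕ Fin n) (Fin n ⊕ Fin n) k),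
            y ∈ TDset k n m ∧ x = wMat k n w * y * (wMat k n w)⁻¹}) := by
  refine ⟨⟨?_, ?_⟩, ⟨?_, ?_⟩, ?_⟩
  · rintro ⟨g, hg, -, hmem⟩
    exact exists_perm hm t d ht (count_le hm t d ht g hg hmem)
  · rintro ⟨w, hw⟩
    exact ⟨wMat k n w, wMat_isUnit w, wMat_J w, hw⟩
  · rintro ⟨w, hw⟩
    exact count_le hm t d ht (wMat k n w) (wMat_isUnit w) hw
  · exact exists_perm hm t d ht
  · ext x
    simp only [Set.mem_setOf_eq]
    constructor
    · rintro ⟨⟨g, hg, -, y, hy, hxy⟩, t'', d'', ht'', hx⟩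
      have hdet : IsUnit g.det := (Matrix.isUnit_iff_isUnit_det g).mp hg
      have hdetinv : IsUnit g⁻¹ := by
        rw [Matrix.isUnit_nonsing_inv_iff, Matrix.isUnit_iff_isUnit_det]
        exact hdet
      have hmem : g⁻¹ * (tDiag k n t'' + dMat k n d'') * (g⁻¹)⁻¹ ∈ TDset k n m := by
        rw [← hx, Matrix.nonsing_inv_nonsing_inv g hdet, hxy,
          ← Matrix.mul_assoc, ← Matrix.mul_assoc, Matrix.nonsing_inv_mul g hdet,
          Matrix.one_mul, Matrix.mul_assoc, Matrix.nonsing_inv_mul g hdet, Matrix.mul_one]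
        exact hy
      have hcount := count_le hm t'' d'' ht'' g⁻¹ hdetinv hmem
      obtain ⟨w, hw⟩ := exists_perm hm t'' d'' ht'' hcount
      rw [← hx] at hw
      refine ⟨w⁻¹, wMat k n w * x * (wMat k n w)⁻¹, hw, ?_⟩
      have h1 : wMat k n w⁻¹ * wMat k n w = 1 := by
        rw [wMat_mul, mul_inv_cancel, wMat_one]
      rw [wMat_inv w, wMat_inv w⁻¹, inv_inv]
      rw [← Matrix.mul_assoc, ← Matrix.mul_assoc, h1, Matrix.one_mul,
        Matrix.mul_assoc, h1, Matrix.mul_one]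
    · rintro ⟨w, y, hy, hx⟩
      refine ⟨⟨wMat k n w, wMat_isUnit w, wMat_J w, y, hy, hx⟩, ?_⟩
      obtain ⟨t', d', ht', hd', hy'⟩ := hy
      exact ⟨t' ∘ w, d' ∘ w, ht'.comp w.injective, by rw [hx, hy', wConj]⟩
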